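/- With the above notation, r·(l + m + n + 1 − √(l²+1) − √(m²+1) − √(n²+1))/(2l) = r_A·cos²σ. -/

import Mathlib

set_option maxHeartbeats 1000000


open Real

theorem malfatti_radius_i6_A
    (a b c : ℝ) (ha : 0 < a) (hb : 0 < b) (hc : 0 < c)
    (habc : a < b + c) (hbca : b < c + a) (hcab : c < a + b)
    (s r rA rB rC α β γ σ l m n : ℝ)
    (hs : s = (a + b + c) / 2)
    (hr : r = Real.sqrt ((s - a) * (s - b) * (s - c) / s))
    (hrA : rA = Real.sqrt (s * (s - b) * (s - c) / (s - a)))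
    (hrB : rB = Real.sqrt (s * (s - c) * (s - a) / (s - b)))
    (hrC : rC = Real.sqrt (s * (s - a) * (s - b) / (s - c)))
    (hα : α ∈ Set.Ioo 0 (π / 2)) (hβ : β ∈ Set.Ioo 0 (π / 2)) (hγ : γ ∈ Set.Ioo 0 (π / 2))
    (hsinα : Real.sin α ^ 2 = a / s)
    (hsinβ : Real.sin β ^ 2 = b / s)
    (hsinγ : Real.sin γ ^ 2 = c / s)
    (hσ : σ = (α + β + γ) / 2)
    (hl : l = (s - a) / r) (hm : m = (s - b) / r) (hn : n = (s - c) / r) :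
    r * (l + m + n + 1 - Real.sqrt (l ^ 2 + 1) - Real.sqrt (m ^ 2 + 1) - Real.sqrt (n ^ 2 + 1)) / (2 * l) = rA * Real.cos σ ^ 2 := by
  have hs0 : 0 < s := by rw [hs]; linarith
  have hx : 0 < s - a := by rw [hs]; linarith
  have hy : 0 < s - b := by rw [hs]; linarith
  have hz : 0 < s - c := by rw [hs]; linarith
  have hr0 : 0 < r := by rw [hr]; exact Real.sqrt_pos.mpr (by positivity)
  have hr2 : r ^ 2 = (s - a) * (s - b) * (s - c) / s := by
    rw [hr, Real.sq_sqrt (by positivity)]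
  -- sqrt(l^2+1) etc.
  have keyA : l ^ 2 + 1 = ((s - a) * b * c / s) / r ^ 2 := by
    rw [hl, div_pow, hr2]
    field_simp
    subst hs; ring
  have keyB : m ^ 2 + 1 = ((s - b) * c * a / s) / r ^ 2 := by
    rw [hm, div_pow, hr2]
    field_simp
    subst hs; ring
  have keyC : n ^ 2 + 1 = ((s - c) * a * b / s) / r ^ 2 := by
    rw [hn, div_pow, hr2]
    field_simp
    subst hs; ring
  have hA : Real.sqrt (l ^ 2 + 1) = Real.sqrt ((s - a) * b * c / s) / r := by
    rw [keyA, Real.sqrt_div (by positivity), Real.sqrt_sq hr0.le]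
  have hB : Real.sqrt (m ^ 2 + 1) = Real.sqrt ((s - b) * c * a / s) / r := by
    rw [keyB, Real.sqrt_div (by positivity), Real.sqrt_sq hr0.le]
  have hC : Real.sqrt (n ^ 2 + 1) = Real.sqrt ((s - c) * a * b / s) / r := by
    rw [keyC, Real.sqrt_div (by positivity), Real.sqrt_sq hr0.le]
  -- cos and sin values
  have cosval : ∀ θ t : ℝ, θ ∈ Set.Ioo 0 (π / 2) → Real.sin θ ^ 2 = t / s →
      Real.cos θ = Real.sqrt ((s - t) / s) ∧ Real.sin θ = Real.sqrt (t / s) := by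
    intro θ t hθ hsin
    have hcpos : 0 < Real.cos θ :=
      Real.cos_pos_of_mem_Ioo ⟨by linarith [hθ.1, Real.pi_pos], hθ.2⟩
    have hspos : 0 < Real.sin θ :=
      Real.sin_pos_of_pos_of_lt_pi hθ.1 (by linarith [hθ.2, Real.pi_pos])
    have hc2 : Real.cos θ ^ 2 = (s - t) / s := by
      have h1 : Real.cos θ ^ 2 = 1 - Real.sin θ ^ 2 := by
        linarith [Real.sin_sq_add_cos_sq θ]
      rw [h1, hsin]
      field_simp
    constructor
    · rw [← hc2, Real.sqrt_sq hcpos.le]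
    · rw [← hsin, Real.sqrt_sq hspos.le]
  obtain ⟨hcα, hsα⟩ := cosval α a hα hsinα
  obtain ⟨hcβ, hsβ⟩ := cosval β b hβ hsinβ
  obtain ⟨hcγ, hsγ⟩ := cosval γ c hγ hsinγ
  -- products of square roots
  have prod3 : ∀ u v w : ℝ, 0 ≤ u → 0 ≤ v → 0 ≤ w →
      Real.sqrt (u / s) * Real.sqrt (v / s) * Real.sqrt (w / s)
        = Real.sqrt (u * v * w / s) / s := by
    intro u v w hu hv hw
    rw [← Real.sqrt_mul (by positivity), ← Real.sqrt_mul (by positivity),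
      show u / s * (v / s) * (w / s) = (u * v * w / s) / s ^ 2 by
        field_simp,
      Real.sqrt_div (by positivity), Real.sqrt_sq hs0.le]
  have prodr : Real.sqrt ((s - a) / s) * Real.sqrt ((s - b) / s) * Real.sqrt ((s - c) / s)
      = r / s := by
    rw [prod3 _ _ _ hx.le hy.le hz.le, hr]
  have prodP : Real.sqrt ((s - a) / s) * Real.sqrt (b / s) * Real.sqrt (c / s)
      = Real.sqrt ((s - a) * b * c / s) / s := prod3 _ _ _ hx.le hb.le hc.le
  have prodQ : Real.sqrt (a / s) * Real.sqrt ((s - b) / s) * Real.sqrt (c / s)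
      = Real.sqrt ((s - b) * c * a / s) / s := by
    rw [show Real.sqrt (a / s) * Real.sqrt ((s - b) / s) * Real.sqrt (c / s)
        = Real.sqrt ((s - b) / s) * Real.sqrt (c / s) * Real.sqrt (a / s) by ring,
      prod3 _ _ _ hy.le hc.le ha.le]
  have prodR : Real.sqrt (a / s) * Real.sqrt (b / s) * Real.sqrt ((s - c) / s)
      = Real.sqrt ((s - c) * a * b / s) / s := by
    rw [show Real.sqrt (a / s) * Real.sqrt (b / s) * Real.sqrt ((s - c) / s)
        = Real.sqrt ((s - c) / s) * Real.sqrt (a / s) * Real.sqrt (b / s) by ring,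
      prod3 _ _ _ hz.le ha.le hb.le]
  -- cos of the full angle
  have hcos3 : Real.cos (α + β + γ)
      = (r - Real.sqrt ((s - a) * b * c / s) - Real.sqrt ((s - b) * c * a / s)
          - Real.sqrt ((s - c) * a * b / s)) / s := by
    rw [Real.cos_add, Real.cos_add, Real.sin_add, hcα, hcβ, hcγ, hsα, hsβ, hsγ]
    linear_combination prodr - prodP - prodQ - prodR
  have hcossq : Real.cos σ ^ 2 = 1 / 2 + Real.cos (α + β + γ) / 2 := by
    rw [Real.cos_sq, hσ, show 2 * ((α + β + γ) / 2) = α + β + γ from by ring]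
  -- rA in terms of r
  have hrA' : rA = r * s / (s - a) := by
    rw [hrA, show s * (s - b) * (s - c) / (s - a)
        = ((s - a) * (s - b) * (s - c) / s) * (s / (s - a)) ^ 2 by
      field_simp,
      Real.sqrt_mul (by positivity), Real.sqrt_sq (by positivity), ← hr]
    field_simp
  -- final algebra
  rw [hA, hB, hC, hl, hm, hn, hrA', hcossq, hcos3]
  generalize Real.sqrt ((s - a) * b * c / s) = P
  generalize Real.sqrt ((s - b) * c * a / s) = Q
  generalize Real.sqrt ((s - c) * a * b / s) = R
  have hx' : s - a ≠ 0 := hx.ne'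
  have hr' : r ≠ 0 := hr0.ne'
  have hs' : s ≠ 0 := hs0.ne'
  have hc' : c = 2 * s - a - b := by linarith [hs]
  subst hc'
  field_simp
  ring
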